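/- Let A and F be positive integers with A + F > 0. If the integers are partitioned into consecutive blocks of length A + F, and in each block the first A indices are active while the last F are inactive, and F ≥ ⌈L_T/2⌉, then in the Wyner L_T interference model no active user in one block interferes with any active user in a different block. Consequently the fraction of active users is A/(A+F). -/

import Mathlib

open Finset

/-- Blocks of `A` active users followed by `F ≥ ⌈L_T/2⌉` inactive users: active users in
different blocks do not interfere in the Wyner `L_T` model, and the fraction of active
users is `A/(A+F)`. -/
theorem block_scheme_no_interference (L_T A F : ℕ) (hA : 0 < A) (hF : 0 < F)
    (hFL : (L_T + 1) / 2 ≤ F) :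
    (∀ m n : ℤ, m % (A + F) < A → n % (A + F) < A →
      m / (A + F) ≠ n / (A + F) →
      ¬ (n ≠ m ∧ m - (L_T : ℤ) / 2 ≤ n ∧ n ≤ m + ((L_T : ℤ) + 1) / 2)) ∧
    (∀ B : ℕ,
      ((Finset.range ((A + F) * B)).filter (fun n => n % (A + F) < A)).card = A * B) := by
  constructor
  · rintro m n hm hn hq ⟨hne, h1, h2⟩
    have hP : (0:ℤ) < (A:ℤ) + F := by positivity
    have hPne : ((A:ℤ) + F) ≠ 0 := ne_of_gt hP
    have hm' := Int.mul_ediv_add_emod m ((A:ℤ)+F)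
    have hn' := Int.mul_ediv_add_emod n ((A:ℤ)+F)
    have h0m : 0 ≤ m % ((A:ℤ)+F) := Int.emod_nonneg m hPne
    have h0n : 0 ≤ n % ((A:ℤ)+F) := Int.emod_nonneg n hPne
    have hL1 : ((L_T:ℤ)+1)/2 = (((L_T+1)/2 : ℕ) : ℤ) := by
      push_cast [Int.natCast_ediv]; norm_num
    have hFL' : ((L_T:ℤ)+1)/2 ≤ (F : ℤ) := by
      rw [hL1]; exact_mod_cast hFL
    have hL2 : (L_T:ℤ)/2 ≤ ((L_T:ℤ)+1)/2 := by
      apply Int.ediv_le_ediv (by norm_num); omega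
    rcases lt_or_gt_of_ne hq with h | h
    · have hkey : ((A:ℤ)+F) * (m/((A:ℤ)+F)) + ((A:ℤ)+F) ≤ ((A:ℤ)+F) * (n/((A:ℤ)+F)) := by
        have := mul_le_mul_of_nonneg_left (Int.add_one_le_iff.mpr h) (le_of_lt hP)
        linarith [this]
      linarith
    · have hkey : ((A:ℤ)+F) * (n/((A:ℤ)+F)) + ((A:ℤ)+F) ≤ ((A:ℤ)+F) * (m/((A:ℤ)+F)) := by
        have := mul_le_mul_of_nonneg_left (Int.add_one_le_iff.mpr h) (le_of_lt hP)
        linarith [this]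
      linarith
  · intro B
    induction B with
    | zero => simp
    | succ B ih =>
      have hsplit : range ((A+F) * (B+1)) =
          range ((A+F)*B) ∪ Ico ((A+F)*B) ((A+F)*B + (A+F)) := by
        rw [range_eq_Ico, range_eq_Ico, Finset.Ico_union_Ico_eq_Ico (Nat.zero_le _)
          (Nat.le_add_right _ _)]
        ring_nf
      have hdisj : Disjoint ((range ((A+F)*B)).filter (fun n => n % (A + F) < A))
          ((Ico ((A+F)*B) ((A+F)*B + (A+F))).filter (fun n => n % (A + F) < A)) := by
        apply Finset.disjoint_filter_filter
        rw [range_eq_Ico]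
        exact Finset.Ico_disjoint_Ico_consecutive _ _ _
      have hIco : (Ico ((A+F)*B) ((A+F)*B + (A+F))).filter (fun n => n % (A + F) < A)
          = Ico ((A+F)*B) ((A+F)*B + A) := by
        ext x
        simp only [mem_filter, mem_Ico]
        constructor
        · rintro ⟨⟨hx1, hx2⟩, hx3⟩
          refine ⟨hx1, ?_⟩
          obtain ⟨k, rfl⟩ := Nat.exists_eq_add_of_le hx1
          have hk : k < A + F := by omega
          have : ((A+F)*B + k) % (A+F) = k := by
            rw [add_comm, Nat.add_mul_mod_self_left, Nat.mod_eq_of_lt hk]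
          omega
        · rintro ⟨hx1, hx2⟩
          obtain ⟨k, rfl⟩ := Nat.exists_eq_add_of_le hx1
          have hk : k < A := by omega
          have : ((A+F)*B + k) % (A+F) = k := by
            rw [add_comm, Nat.add_mul_mod_self_left, Nat.mod_eq_of_lt (by omega)]
          refine ⟨⟨hx1, by omega⟩, by omega⟩
      rw [hsplit, Finset.filter_union, Finset.card_union_of_disjoint hdisj, ih, hIco,
        Nat.card_Ico]
      ring_nf
      omega
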